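/- arXiv:1411.6712 — 9 statements merged into one kernel-verified Lean document; each statement's English description precedes it below -/
import Mathlib

section
/- Let F be a subfield of the real numbers and p a prime such that √p ∉ F. Then for any univariate polynomial q(x) with coefficients in F, the multiplicity of √p as a root of q equals the multiplicity of -√p as a root of q. -/
open Polynomial

theorem sqrt_multiplicity_eq (F : Subfield ℝ) (p : ℕ) (hp : p.Prime)
    (hF : Real.sqrt p ∉ F) (q : Polynomial F) (hq : q ≠ 0) :
    Polynomial.rootMultiplicity (Real.sqrt p) (q.map (algebraMap F ℝ)) =
      Polynomial.rootMultiplicity (-Real.sqrt p) (q.map (algebraMap F ℝ)) := by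
  set s : ℝ := Real.sqrt p with hs
  have hs2 : s ^ 2 = (p : ℝ) := Real.sq_sqrt (by positivity)
  -- the candidate minimal polynomial
  set d : Polynomial F := X ^ 2 - C (p : F) with hd
  have hdmonic : d.Monic := by
    apply Polynomial.monic_X_pow_sub_C _ (by norm_num)
  have hmapd : aeval s d = 0 := by
    simp only [hd, map_sub, map_pow, aeval_X, aeval_C, map_natCast, hs2, sub_self]
  have hint : IsIntegral F s := ⟨d, hdmonic, by
    rw [← aeval_def]; exact hmapd⟩
  have hnotrange : s ∉ (algebraMap F ℝ).range := by
    rintro ⟨y, hy⟩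
    exact hF (hy ▸ y.2)
  -- the minimal polynomial equals d
  have hdegd : d.natDegree = 2 := by
    simp [hd]
    compute_degree!
  have hmin : minpoly F s = d := by
    refine (Polynomial.eq_of_monic_of_dvd_of_natDegree_le (minpoly.monic hint) hdmonic
      (minpoly.dvd F s hmapd) ?_).symm
    rw [hdegd]
    exact (minpoly.two_le_natDegree_iff hint).mpr hnotrange
  have haevalneg : aeval (-s) (minpoly F s) = 0 := by
    rw [hmin, hd]
    simp only [map_sub, map_pow, aeval_X, aeval_C, map_natCast, neg_sq, hs2, sub_self]
  have haeval : aeval s (minpoly F s) = 0 := minpoly.aeval F s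
  -- AdjoinRoot machinery
  haveI : Fact (Irreducible (minpoly F s)) := ⟨minpoly.irreducible hint⟩
  set K := AdjoinRoot (minpoly F s)
  let φ₁ : K →ₐ[F] ℝ := AdjoinRoot.liftAlgHom _ (Algebra.ofId F ℝ) s haeval
  let φ₂ : K →ₐ[F] ℝ := AdjoinRoot.liftAlgHom _ (Algebra.ofId F ℝ) (-s) haevalneg
  have hinj₁ : Function.Injective (φ₁ : K →+* ℝ) := (φ₁ : K →+* ℝ).injective
  have hinj₂ : Function.Injective (φ₂ : K →+* ℝ) := (φ₂ : K →+* ℝ).injective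
  have hKinj : Function.Injective (algebraMap F K) := (algebraMap F K).injective
  have key : ∀ (φ : K →ₐ[F] ℝ),
      Polynomial.rootMultiplicity (φ (AdjoinRoot.root (minpoly F s))) (q.map (algebraMap F ℝ))
        = Polynomial.rootMultiplicity (AdjoinRoot.root (minpoly F s))
            (q.map (algebraMap F K)) := by
    intro φ
    have h1 : q.map (algebraMap F ℝ) = (q.map (algebraMap F K)).map (φ : K →+* ℝ) := by
      rw [Polynomial.map_map]
      congr 1
      exact (φ.comp_algebraMap).symm
    rw [h1]
    exact (Polynomial.eq_rootMultiplicity_map (f := (φ : K →+* ℝ)) (φ : K →+* ℝ).injective _).symm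
  have h1 := key φ₁
  have h2 := key φ₂
  rw [show φ₁ (AdjoinRoot.root (minpoly F s)) = s from AdjoinRoot.liftAlgHom_root _ _ _ _] at h1
  rw [show φ₂ (AdjoinRoot.root (minpoly F s)) = -s from AdjoinRoot.liftAlgHom_root _ _ _ _] at h2
  rw [h1, h2]
end

section
/- Let F be a subfield of the real numbers and p a prime such that √p ∉ F. Let A be an N-by-N matrix with entries in F. Then rank(√p·I + A) ≥ ⌈N/2⌉. -/
open Polynomial

lemma minpoly_neg_sqrt_aux (F : Subfield ℝ) (p : ℕ) (hp : p.Prime)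
    (hF : Real.sqrt p ∉ F) :
    minpoly F (-Real.sqrt p : ℝ) = X ^ 2 - C ((p : F)) := by
  have hPm : (X ^ 2 - C ((p : F)) : Polynomial F).Monic := monic_X_pow_sub_C _ two_ne_zero
  have haev : (aeval (-Real.sqrt p : ℝ)) ((X ^ 2 - C ((p : F)) : Polynomial F)) = 0 := by
    have h1 : ((algebraMap F ℝ) ((p : F))) = (p : ℝ) := map_natCast _ _
    simp only [map_sub, map_pow, aeval_X, aeval_C, h1, neg_sq]
    rw [Real.sq_sqrt (Nat.cast_nonneg p), sub_self]
  have hd := minpoly.dvd F (-Real.sqrt p : ℝ) haev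
  have hint : IsIntegral F (-Real.sqrt p : ℝ) := ⟨_, hPm, haev⟩
  have hmon := minpoly.monic hint
  have hdeg2 : (minpoly F (-Real.sqrt p : ℝ)).natDegree = 2 := by
    have hle : (minpoly F (-Real.sqrt p : ℝ)).natDegree ≤ 2 := by
      have := natDegree_le_of_dvd hd hPm.ne_zero
      rwa [natDegree_X_pow_sub_C] at this
    have hpos := minpoly.natDegree_pos hint
    have h1 : (minpoly F (-Real.sqrt p : ℝ)).natDegree ≠ 1 := by
      intro h1
      have hdeg : (minpoly F (-Real.sqrt p : ℝ)).degree = 1 := by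
        rw [degree_eq_natDegree hmon.ne_zero, h1]
        rfl
      obtain ⟨a, ha⟩ := minpoly.degree_eq_one_iff.mp hdeg
      apply hF
      have hcoe : Real.sqrt p = ((-a : F) : ℝ) := by
        have : ((a : F) : ℝ) = -Real.sqrt p := ha
        push_cast
        rw [this, neg_neg]
      rw [hcoe]
      exact SetLike.coe_mem _
    omega
  obtain ⟨c, hc⟩ := hd
  have hcm : c.Monic := hmon.of_mul_monic_left (hc ▸ hPm)
  have hc0 : c.natDegree = 0 := by
    have h2 : (2 : ℕ) = 2 + c.natDegree := by
      conv_lhs => rw [← natDegree_X_pow_sub_C (n := 2) (r := ((p : F)))]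
      rw [hc, hmon.natDegree_mul hcm, hdeg2]
    omega
  rw [hc, hcm.natDegree_eq_zero.mp hc0, mul_one]

lemma two_mul_rootMultiplicity_le_aux (F : Subfield ℝ) (p : ℕ) (hp : p.Prime)
    (hF : Real.sqrt p ∉ F) :
    ∀ (n : ℕ) (q : Polynomial F), q.natDegree = n → q.Monic →
      2 * rootMultiplicity (-Real.sqrt p) (q.map (algebraMap F ℝ)) ≤ n := by
  intro n
  induction n using Nat.strong_induction_on with
  | _ n ih =>
    intro q hdeg hq
    by_cases hm : rootMultiplicity (-Real.sqrt p) (q.map (algebraMap F ℝ)) = 0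
    · simp [hm]
    · have hq0 : q.map (algebraMap F ℝ) ≠ 0 := (hq.map _).ne_zero
      have hroot : (q.map (algebraMap F ℝ)).IsRoot (-Real.sqrt p) :=
        (rootMultiplicity_pos hq0).1 (Nat.pos_of_ne_zero hm)
      have haev : aeval (-Real.sqrt p : ℝ) q = 0 := by
        rw [aeval_def, eval₂_eq_eval_map]
        exact hroot
      have hdvd : (X ^ 2 - C ((p : F)) : Polynomial F) ∣ q :=
        minpoly_neg_sqrt_aux F p hp hF ▸ minpoly.dvd F _ haev
      obtain ⟨q₁, rfl⟩ := hdvd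
      have hPm : (X ^ 2 - C ((p : F)) : Polynomial F).Monic := monic_X_pow_sub_C _ two_ne_zero
      have hq₁ : q₁.Monic := hPm.of_mul_monic_left hq
      have hmapP : ((X ^ 2 - C ((p : F)) : Polynomial F).map (algebraMap F ℝ))
          = (X - C (Real.sqrt p)) * (X - C (-Real.sqrt p)) := by
        simp only [Polynomial.map_sub, Polynomial.map_pow, map_X, map_C]
        rw [show (algebraMap F ℝ) ((p : F)) = Real.sqrt p * Real.sqrt p by
          rw [map_natCast]; exact (Real.mul_self_sqrt (Nat.cast_nonneg p)).symm]
        rw [C_mul, C_neg]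
        ring
      have hne : ((X ^ 2 - C ((p : F)) : Polynomial F).map (algebraMap F ℝ)) *
          (q₁.map (algebraMap F ℝ)) ≠ 0 := by
        rw [← Polynomial.map_mul]
        exact (hq.map _).ne_zero
      have hne2 : ((X : Polynomial ℝ) - C (Real.sqrt p)) * (X - C (-Real.sqrt p)) ≠ 0 :=
        mul_ne_zero (X_sub_C_ne_zero _) (X_sub_C_ne_zero _)
      have hsp : (0 : ℝ) < Real.sqrt p := Real.sqrt_pos.2 (by exact_mod_cast hp.pos)
      have hnr : ¬ ((X : Polynomial ℝ) - C (Real.sqrt p)).IsRoot (-Real.sqrt p) := by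
        simp only [IsRoot, eval_sub, eval_X, eval_C]
        intro h
        nlinarith
      rw [Polynomial.map_mul, rootMultiplicity_mul hne, hmapP, rootMultiplicity_mul hne2,
        rootMultiplicity_eq_zero hnr, rootMultiplicity_X_sub_C_self]
      have hd2 : n = 2 + q₁.natDegree := by
        rw [← hdeg, hPm.natDegree_mul hq₁, natDegree_X_pow_sub_C]
      have hih := ih q₁.natDegree (by omega) q₁ rfl hq₁
      omega

theorem rank_sqrt_id_add (F : Subfield ℝ) (p : ℕ) (hp : p.Prime)
    (hF : Real.sqrt p ∉ F) (N : ℕ) (A : Matrix (Fin N) (Fin N) ℝ)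
    (hA : ∀ i j, A i j ∈ F) :
    (N + 1) / 2 ≤ (Real.sqrt p • (1 : Matrix (Fin N) (Fin N) ℝ) + A).rank := by
  set B : Matrix (Fin N) (Fin N) ℝ := Real.sqrt p • 1 + A with hB
  set q : Polynomial ℝ := Matrix.charpoly A with hqdef
  set m : ℕ := rootMultiplicity (-Real.sqrt p) q with hmdef
  have hq0 : q ≠ 0 := (Matrix.charpoly_monic A).ne_zero
  -- charpoly of B is charpoly of A composed with X - C √p
  have hcomp : B.charpoly = q.comp (X - C (Real.sqrt p)) := by
    have hmap : (Matrix.charmatrix A).map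
        (⇑(eval₂RingHom (C : ℝ →+* Polynomial ℝ) (X - C (Real.sqrt p)))) = Matrix.charmatrix B := by
      ext i j
      by_cases h : i = j
      · subst h
        simp only [Matrix.map_apply, Matrix.charmatrix_apply_eq, coe_eval₂RingHom, eval₂_sub,
          eval₂_X, eval₂_C, hB, Matrix.add_apply, Matrix.smul_apply, Matrix.one_apply_eq,
          smul_eq_mul, mul_one, C_add]
        ring
      · simp only [Matrix.map_apply, Matrix.charmatrix_apply_ne _ _ _ h, coe_eval₂RingHom,
          eval₂_neg, eval₂_C, hB, Matrix.add_apply, Matrix.smul_apply, Matrix.one_apply_ne h,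
          smul_eq_mul, mul_zero, zero_add]
    calc B.charpoly = (Matrix.charmatrix B).det := rfl
      _ = ((Matrix.charmatrix A).map
            (⇑(eval₂RingHom (C : ℝ →+* Polynomial ℝ) (X - C (Real.sqrt p))))).det := by
          rw [hmap]
      _ = (eval₂RingHom (C : ℝ →+* Polynomial ℝ) (X - C (Real.sqrt p))) (Matrix.charmatrix A).det := by
          rw [RingHom.map_det]
          rfl
      _ = q.comp (X - C (Real.sqrt p)) := rfl
  -- factor out X^m
  set r : Polynomial ℝ := q /ₘ (X - C (-Real.sqrt p)) ^ m with hrdef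
  have hfac : (X - C (-Real.sqrt p)) ^ m * r = q :=
    pow_mul_divByMonic_rootMultiplicity_eq q _
  have hre : r.eval (-Real.sqrt p) ≠ 0 :=
    eval_divByMonic_pow_rootMultiplicity_ne_zero _ hq0
  have hQ : B.charpoly = X ^ m * (r.comp (X - C (Real.sqrt p))) := by
    rw [hcomp, ← hfac, mul_comp, pow_comp, sub_comp, X_comp, C_comp, C_neg, sub_neg_eq_add,
      sub_add_cancel]
  have hcoeff : (B.charpoly).coeff m ≠ 0 := by
    rw [hQ]
    have hcx := coeff_X_pow_mul (r.comp (X - C (Real.sqrt p))) m 0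
    rw [zero_add] at hcx
    rw [hcx, coeff_zero_eq_eval_zero, eval_comp]
    simpa using hre
  have htd : (B.charpoly).natTrailingDegree ≤ m := natTrailingDegree_le_of_ne_zero hcoeff
  -- charpoly of the endomorphism equals charpoly of the matrix
  have hψ : (LinearMap.charpoly (Matrix.mulVecLin B)) = B.charpoly := by
    have h0 : B = LinearMap.toMatrix (Pi.basisFun ℝ (Fin N)) (Pi.basisFun ℝ (Fin N))
        (Matrix.mulVecLin B) := by
      rw [LinearMap.toMatrix_eq_toMatrix', ← Matrix.toLin'_apply', LinearMap.toMatrix'_toLin']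
    conv_rhs => rw [h0]
    exact (LinearMap.charpoly_toMatrix _ _).symm
  -- kernel dimension bound
  have hker : Module.finrank ℝ (LinearMap.ker (Matrix.mulVecLin B)) ≤ m := by
    have hle : LinearMap.ker (Matrix.mulVecLin B) ≤
        Module.End.maxGenEigenspace (Matrix.mulVecLin B) 0 := by
      intro x hx
      rw [Module.End.mem_maxGenEigenspace]
      refine ⟨1, ?_⟩
      simpa using hx
    calc Module.finrank ℝ (LinearMap.ker (Matrix.mulVecLin B))
        ≤ Module.finrank ℝ (Module.End.maxGenEigenspace (Matrix.mulVecLin B) 0) :=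
          Submodule.finrank_mono hle
      _ = (LinearMap.charpoly (Matrix.mulVecLin B)).natTrailingDegree :=
          LinearMap.finrank_maxGenEigenspace_zero_eq _
      _ = (B.charpoly).natTrailingDegree := by rw [hψ]
      _ ≤ m := htd
  -- algebraic multiplicity bound via the subfield
  set A₀ : Matrix (Fin N) (Fin N) F := fun i j => (⟨A i j, hA i j⟩ : F) with hA₀
  have hA₀map : A₀.map (⇑(algebraMap F ℝ)) = A := by
    ext i j
    rfl
  have hqmap : (A₀.charpoly).map (algebraMap F ℝ) = q := by
    rw [hqdef, ← hA₀map, Matrix.charpoly_map]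
  have h2m : 2 * m ≤ N := by
    have hN : A₀.charpoly.natDegree = N := by
      rw [Matrix.charpoly_natDegree_eq_dim, Fintype.card_fin]
    have := two_mul_rootMultiplicity_le_aux F p hp hF N A₀.charpoly hN (Matrix.charpoly_monic A₀)
    rwa [hqmap, ← hmdef] at this
  -- rank-nullity
  have hrk : B.rank + Module.finrank ℝ (LinearMap.ker (Matrix.mulVecLin B)) = N := by
    have h := LinearMap.finrank_range_add_finrank_ker (Matrix.mulVecLin B)
    rw [Module.finrank_fin_fun] at h
    exact h
  omega
end

section
/- Let F be a subfield of the real numbers and p a prime with √p ∉ F, and let A be an N-by-N matrix with entries in F. Then the eigenvalue -√p of A (viewed over ℝ) has algebraic multiplicity at most ⌊N/2⌋ as a root of the characteristic polynomial of A. -/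
open Polynomial

lemma aux_mult (F : Subfield ℝ) (x : ℝ) (hx : IsIntegral F x) :
    ∀ n (q : F[X]), q.natDegree = n → q ≠ 0 →
    (minpoly F x).natDegree * rootMultiplicity x (q.map (algebraMap F ℝ)) ≤ q.natDegree := by
  intro n
  induction n using Nat.strong_induction_on with
  | _ n ih =>
    intro q hdeg hq
    by_cases hroot : (q.map (algebraMap F ℝ)).IsRoot x
    · have haev : (Polynomial.aeval x) q = 0 := by
        rwa [aeval_def, ← eval_map] at *
      obtain ⟨r, hr⟩ := minpoly.dvd F x haev
      have hm0 : minpoly F x ≠ 0 := minpoly.ne_zero hx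
      have hr0 : r ≠ 0 := by rintro rfl; simp at hr; exact hq hr
      have hdpos : 0 < (minpoly F x).natDegree := minpoly.natDegree_pos hx
      have hnd : q.natDegree = (minpoly F x).natDegree + r.natDegree := by
        rw [hr, Polynomial.natDegree_mul hm0 hr0]
      have hinj : Function.Injective (algebraMap F ℝ) := (algebraMap F ℝ).injective
      have hmul : rootMultiplicity x (q.map (algebraMap F ℝ))
          = rootMultiplicity x ((minpoly F x).map (algebraMap F ℝ))
            + rootMultiplicity x (r.map (algebraMap F ℝ)) := by
        rw [hr, Polynomial.map_mul, Polynomial.rootMultiplicity_mul]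
        exact mul_ne_zero (by simpa using (Polynomial.map_ne_zero_iff hinj).mpr hm0)
          ((Polynomial.map_ne_zero_iff hinj).mpr hr0)
      have hsep : ((minpoly F x).map (algebraMap F ℝ)).Separable :=
        ((minpoly.irreducible hx).separable).map
      have hone : rootMultiplicity x ((minpoly F x).map (algebraMap F ℝ)) ≤ 1 :=
        Polynomial.rootMultiplicity_le_one_of_separable hsep x
      have hih := ih r.natDegree (by omega) r rfl hr0
      calc (minpoly F x).natDegree * rootMultiplicity x (q.map (algebraMap F ℝ))
          = (minpoly F x).natDegree * rootMultiplicity x ((minpoly F x).map (algebraMap F ℝ))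
            + (minpoly F x).natDegree * rootMultiplicity x (r.map (algebraMap F ℝ)) := by
            rw [hmul, Nat.mul_add]
        _ ≤ (minpoly F x).natDegree * 1 + r.natDegree := by
            exact Nat.add_le_add (Nat.mul_le_mul_left _ hone) hih
        _ ≤ q.natDegree := by omega
    · rw [Polynomial.rootMultiplicity_eq_zero hroot]
      simp

theorem charpoly_mult_le (F : Subfield ℝ) (p : ℕ) (hp : p.Prime)
    (hF : Real.sqrt p ∉ F) (N : ℕ) (A : Matrix (Fin N) (Fin N) ℝ)
    (hA : ∀ i j, A i j ∈ F) :
    Polynomial.rootMultiplicity (-Real.sqrt p) (Matrix.charpoly A) ≤ N / 2 := by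
  set x : ℝ := -Real.sqrt p with hxdef
  have hpF : ((p : ℝ)) ∈ F := by exact_mod_cast natCast_mem F p
  -- x is integral over F: root of X^2 - C p
  have hx : IsIntegral F x := by
    refine ⟨X ^ 2 - C ⟨(p : ℝ), hpF⟩, Polynomial.monic_X_pow_sub_C _ (by norm_num), ?_⟩
    have : x ^ 2 = (p : ℝ) := by
      rw [hxdef, neg_pow, Real.sq_sqrt (by positivity)]
      ring
    rw [eval₂_sub, eval₂_pow, eval₂_X, eval₂_C, this]
    exact sub_eq_zero.mpr rfl
  -- degree of minpoly ≥ 2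
  have hxnotin : x ∉ (algebraMap F ℝ).range := by
    rintro ⟨y, hy⟩
    apply hF
    have : Real.sqrt p = ((-y : F) : ℝ) := by
      have : (y : ℝ) = x := hy
      push_cast [this, hxdef]
      ring
    rw [this]; exact (-y).2
  have h2 : 2 ≤ (minpoly F x).natDegree := (minpoly.two_le_natDegree_iff hx).mpr hxnotin
  -- matrix over F
  let A' : Matrix (Fin N) (Fin N) F := fun i j => ⟨A i j, hA i j⟩
  have hmap : A'.map (algebraMap F ℝ) = A := by ext i j; rfl
  have hcp : (A'.charpoly).map (algebraMap F ℝ) = A.charpoly := by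
    rw [← Matrix.charpoly_map, hmap]
  have hdeg : A'.charpoly.natDegree = N := by
    rw [Matrix.charpoly_natDegree_eq_dim, Fintype.card_fin]
  have hne : A'.charpoly ≠ 0 := (A'.charpoly_monic).ne_zero
  have key := aux_mult F x hx A'.charpoly.natDegree A'.charpoly rfl hne
  rw [hcp, hdeg] at key
  have : 2 * rootMultiplicity x A.charpoly ≤ N :=
    le_trans (Nat.mul_le_mul_right _ h2) key
  omega
end

section
/- For any nonnegative m-by-n real matrix A, the positive semidefinite rank of A is at least the square root of the ordinary rank of A: prank(A) ≥ √(rank(A)). -/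
noncomputable def psdRank {m n : ℕ} (A : Matrix (Fin m) (Fin n) ℝ) : ℕ :=
  sInf {r : ℕ | ∃ (E : Fin m → Matrix (Fin r) (Fin r) ℝ) (F : Fin n → Matrix (Fin r) (Fin r) ℝ),
    (∀ i, (E i).PosSemidef) ∧ (∀ j, (F j).PosSemidef) ∧
    ∀ i j, A i j = ((E i) * (F j)).trace}

lemma rank_le_sq {m n r : ℕ} (A : Matrix (Fin m) (Fin n) ℝ)
    (E : Fin m → Matrix (Fin r) (Fin r) ℝ) (F : Fin n → Matrix (Fin r) (Fin r) ℝ)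
    (h : ∀ i j, A i j = ((E i) * (F j)).trace) : A.rank ≤ r * r := by
  set B : Matrix (Fin m) (Fin r × Fin r) ℝ := fun i p => E i p.1 p.2
  set C : Matrix (Fin r × Fin r) (Fin n) ℝ := fun p j => F j p.2 p.1
  have hBC : A = B * C := by
    ext i j
    rw [h i j, Matrix.mul_apply]
    simp only [Matrix.trace, Matrix.diag, Matrix.mul_apply]
    rw [← Finset.sum_product']
    exact Finset.sum_congr rfl (fun p _ => rfl)
  calc A.rank ≤ B.rank := by rw [hBC]; exact Matrix.rank_mul_le_left B C
    _ ≤ Fintype.card (Fin r × Fin r) := Matrix.rank_le_card_width B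
    _ = r * r := by simp

theorem psdRank_ge_sqrt_rank {m n : ℕ} (A : Matrix (Fin m) (Fin n) ℝ)
    (hA : ∀ i j, 0 ≤ A i j) :
    Real.sqrt (A.rank) ≤ (psdRank A : ℝ) := by
  have hne : {r : ℕ | ∃ (E : Fin m → Matrix (Fin r) (Fin r) ℝ)
      (F : Fin n → Matrix (Fin r) (Fin r) ℝ),
      (∀ i, (E i).PosSemidef) ∧ (∀ j, (F j).PosSemidef) ∧
      ∀ i j, A i j = ((E i) * (F j)).trace}.Nonempty := by
    refine ⟨n, fun i => Matrix.diagonal (fun j => A i j),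
      fun j => Matrix.diagonal (Pi.single j 1), ?_, ?_, ?_⟩
    · intro i; exact Matrix.posSemidef_diagonal_iff.mpr (fun j => hA i j)
    · intro j
      refine Matrix.posSemidef_diagonal_iff.mpr (fun k => ?_)
      rcases eq_or_ne k j with h | h <;> simp [h, Pi.single_apply]
    · intro i j
      rw [Matrix.diagonal_mul_diagonal, Matrix.trace_diagonal]
      rw [Finset.sum_eq_single j] <;> simp_all [Pi.single_apply]
  have hmem := Nat.sInf_mem hne
  obtain ⟨E, F, _, _, hEF⟩ := hmem
  have h1 : A.rank ≤ psdRank A * psdRank A := rank_le_sq A E F hEF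
  have h2 : (A.rank : ℝ) ≤ (psdRank A : ℝ) ^ 2 := by
    rw [sq]; exact_mod_cast h1
  calc Real.sqrt (A.rank) ≤ Real.sqrt ((psdRank A : ℝ) ^ 2) := Real.sqrt_le_sqrt h2
    _ = psdRank A := Real.sqrt_sq (by positivity)
end

section
/- For any nonnegative matrix A, the positive semidefinite rank is at most the square root rank: prank(A) ≤ rank_√(A). -/
noncomputable def sqrtRank {m n : ℕ} (A : Matrix (Fin m) (Fin n) ℝ) : ℕ :=
  sInf {r : ℕ | ∃ B : Matrix (Fin m) (Fin n) ℝ, (∀ i j, A i j = B i j * B i j) ∧ B.rank = r}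

open Matrix in
lemma vecMulVec_self_posSemidef {r : ℕ} (u : Fin r → ℝ) : (vecMulVec u u).PosSemidef := by
  rw [posSemidef_iff_dotProduct_mulVec]
  constructor
  · ext k l; simp [vecMulVec, mul_comm]
  · intro x
    have : star x ⬝ᵥ (vecMulVec u u).mulVec x = (u ⬝ᵥ x) * (u ⬝ᵥ x) := by
      simp [dotProduct, mulVec, vecMulVec, Finset.mul_sum, Finset.sum_mul]
      rw [Finset.sum_comm]
      congr 1; ext k; congr 1; ext l; ring
    rw [this]
    exact mul_self_nonneg _

open Matrix in
lemma trace_vecMulVec_mul_vecMulVec {r : ℕ} (a b : Fin r → ℝ) :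
    (vecMulVec a a * vecMulVec b b).trace = (a ⬝ᵥ b) * (a ⬝ᵥ b) := by
  simp [trace, Matrix.mul_apply, vecMulVec, diag, dotProduct, Finset.mul_sum, Finset.sum_mul]
  rw [Finset.sum_comm]
  congr 1; ext k; congr 1; ext l; ring

open Matrix in
lemma exists_rank_factorization {m n : ℕ} (B : Matrix (Fin m) (Fin n) ℝ) :
    ∃ (u : Fin m → Fin B.rank → ℝ) (v : Fin n → Fin B.rank → ℝ),
      ∀ i j, B i j = u i ⬝ᵥ v j := by
  set r := B.rank with hr
  set W := LinearMap.range B.mulVecLin with hW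
  have hfin : Module.finrank ℝ W = r := rfl
  let b : Module.Basis (Fin r) ℝ W := Module.finBasisOfFinrankEq ℝ W hfin
  have hcol : ∀ j, (fun i => B i j) ∈ W := by
    intro j
    exact ⟨Pi.single j 1, by ext i; simp [Matrix.mulVecLin, mulVec, dotProduct, Pi.single_apply]⟩
  refine ⟨fun i k => (b k : Fin m → ℝ) i, fun j k => b.repr ⟨fun i => B i j, hcol j⟩ k, ?_⟩
  intro i j
  have := b.sum_repr ⟨fun i => B i j, hcol j⟩
  have h2 := congrArg (fun w : W => (w : Fin m → ℝ) i) this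
  simp only [Submodule.coe_sum, Submodule.coe_smul, Finset.sum_apply, Pi.smul_apply,
    smul_eq_mul] at h2
  rw [dotProduct]
  rw [← h2]
  exact Finset.sum_congr rfl fun k _ => mul_comm _ _

theorem psdRank_le_sqrtRank {m n : ℕ} (A : Matrix (Fin m) (Fin n) ℝ)
    (hA : ∀ i j, 0 ≤ A i j) :
    psdRank A ≤ sqrtRank A := by
  have hne : {r : ℕ | ∃ B : Matrix (Fin m) (Fin n) ℝ,
      (∀ i j, A i j = B i j * B i j) ∧ B.rank = r}.Nonempty := by
    refine ⟨(Matrix.of fun i j => Real.sqrt (A i j)).rank,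
      Matrix.of fun i j => Real.sqrt (A i j), fun i j => ?_, rfl⟩
    simp [Real.mul_self_sqrt (hA i j)]
  have hmem := Nat.sInf_mem hne
  obtain ⟨B, hB, hrank⟩ := hmem
  have h3 : sqrtRank A = B.rank := hrank.symm
  rw [h3]
  apply Nat.sInf_le
  obtain ⟨u, v, huv⟩ := exists_rank_factorization B
  refine ⟨fun i => Matrix.vecMulVec (u i) (u i), fun j => Matrix.vecMulVec (v j) (v j),
    fun i => vecMulVec_self_posSemidef _, fun j => vecMulVec_self_posSemidef _, fun i j => ?_⟩
  rw [trace_vecMulVec_mul_vecMulVec, ← huv i j, hB]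
end

section
/- If a nonnegative matrix A has positive semidefinite rank d, then there exist matrices N_1, ..., N_{d²}, each of rank at most d, such that A = Σ_{i=1}^{d²} N_i ∘ N_i, where ∘ denotes the entrywise product. -/
theorem psdRank_decomposition {m n : ℕ} (A : Matrix (Fin m) (Fin n) ℝ)
    (hA : ∀ i j, 0 ≤ A i j) (d : ℕ) (hd : psdRank A = d) :
    ∃ N : Fin (d ^ 2) → Matrix (Fin m) (Fin n) ℝ,
      (∀ k, (N k).rank ≤ d) ∧ ∀ i j, A i j = ∑ k, N k i j * N k i j := by
  classical
  set S := {r : ℕ | ∃ (E : Fin m → Matrix (Fin r) (Fin r) ℝ)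
      (F : Fin n → Matrix (Fin r) (Fin r) ℝ),
    (∀ i, (E i).PosSemidef) ∧ (∀ j, (F j).PosSemidef) ∧
    ∀ i j, A i j = ((E i) * (F j)).trace} with hS
  have hne : S.Nonempty := by
    refine ⟨n, fun i => Matrix.diagonal (A i),
      fun j => Matrix.diagonal (Pi.single j 1), ?_, ?_, ?_⟩
    · exact fun i => Matrix.PosSemidef.diagonal (by intro k; exact hA i k)
    · intro j
      refine Matrix.PosSemidef.diagonal ?_
      intro k
      by_cases h : k = j <;> simp [Pi.single_apply, h]
    · intro i j
      simp [Matrix.diagonal_mul_diagonal, Matrix.trace_diagonal, Pi.single_apply,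
        Finset.sum_ite_eq', mul_comm]
  have hdS : d ∈ S := by
    have := Nat.sInf_mem hne
    rwa [show sInf S = d from hd] at this
  obtain ⟨E, F, hE, hF, hEF⟩ := hdS
  -- square roots
  open scoped MatrixOrder in
  set P : Fin m → Matrix (Fin d) (Fin d) ℝ := fun i => CFC.sqrt (E i) with hP
  open scoped MatrixOrder in
  set Q : Fin n → Matrix (Fin d) (Fin d) ℝ := fun j => CFC.sqrt (F j) with hQ
  have hPsym : ∀ i, (P i).transpose = P i := fun i => by
    open scoped MatrixOrder in
    simpa using (Matrix.nonneg_iff_posSemidef.mp (CFC.sqrt_nonneg (E i))).isHermitian.eq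
  have hQsym : ∀ j, (Q j).transpose = Q j := fun j => by
    open scoped MatrixOrder in
    simpa using (Matrix.nonneg_iff_posSemidef.mp (CFC.sqrt_nonneg (F j))).isHermitian.eq
  have hPsq : ∀ i, P i * P i = E i := fun i => by
    open scoped MatrixOrder in
    exact CFC.sqrt_mul_sqrt_self (E i) (hE i).nonneg
  have hQsq : ∀ j, Q j * Q j = F j := fun j => by
    open scoped MatrixOrder in
    exact CFC.sqrt_mul_sqrt_self (F j) (hF j).nonneg
  -- index equivalence
  set e : Fin (d ^ 2) ≃ Fin d × Fin d := (finCongr (sq d)).trans finProdFinEquiv.symm with he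
  refine ⟨fun k => fun i j => (P i * Q j) (e k).1 (e k).2, ?_, ?_⟩
  · intro k
    have hfact : (fun i j => (P i * Q j) (e k).1 (e k).2 : Matrix (Fin m) (Fin n) ℝ)
        = Matrix.of (fun i c => P i (e k).1 c) *
          Matrix.of (fun c j => Q j c (e k).2) := by
      ext i j
      simp [Matrix.mul_apply]
    dsimp only
    rw [hfact]
    exact (Matrix.rank_mul_le_left _ _).trans
      ((Matrix.rank_le_card_width _).trans (by simp))
  · intro i j
    have key : ∑ k : Fin (d ^ 2), (P i * Q j) (e k).1 (e k).2 * (P i * Q j) (e k).1 (e k).2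
        = ∑ p : Fin d × Fin d, (P i * Q j) p.1 p.2 * (P i * Q j) p.1 p.2 :=
      Fintype.sum_equiv e _ _ (fun k => rfl)
    have h1 : (E i * F j).trace = ((P i * Q j) * (Q j * P i)).trace := by
      rw [← hPsq i, ← hQsq j, mul_assoc, Matrix.trace_mul_comm]
      simp only [mul_assoc]
    have h2 : ∀ a b, (Q j * P i) b a = (P i * Q j) a b := by
      intro a b
      have : Q j * P i = (P i * Q j).transpose := by
        rw [Matrix.transpose_mul, hPsym, hQsym]
      rw [this]
      rfl
    rw [key, hEF i j, h1]
    set M := P i * Q j with hM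
    calc (M * (Q j * P i)).trace = ∑ a, ∑ b, M a b * (Q j * P i) b a := by
          simp [Matrix.trace, Matrix.diag, Matrix.mul_apply]
      _ = ∑ a, ∑ b, M a b * M a b := by simp_rw [h2]
      _ = ∑ p : Fin d × Fin d, M p.1 p.2 * M p.1 p.2 := by
          rw [Fintype.sum_prod_type]
end

section
/- For x, y ∈ {0,1}^n, the quantity (xᵀy - 1)(xᵀy - 2) equals Tr((xxᵀ - 3·diag(x))·yyᵀ) + 2 and is nonnegative; hence the matrix M_n(x,y) = (xᵀy - 1)(xᵀy - 2) is a submatrix of the slack matrix of the correlation polytope COR_n. -/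
theorem slack_identity (n : ℕ) (x y : Fin n → ℝ)
    (hx : ∀ i, x i = 0 ∨ x i = 1) (hy : ∀ i, y i = 0 ∨ y i = 1) :
    ((∑ i, x i * y i) - 1) * ((∑ i, x i * y i) - 2) =
      Matrix.trace ((Matrix.vecMulVec x x - (3 : ℝ) • Matrix.diagonal x) *
        Matrix.vecMulVec y y) + 2 ∧
    0 ≤ ((∑ i, x i * y i) - 1) * ((∑ i, x i * y i) - 2) := by
  have hsq : ∀ i, x i * y i * (x i * y i) = x i * y i := by
    intro i
    rcases hx i with h | h <;> rcases hy i with h' | h' <;> simp [h, h']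
  constructor
  · have htr : Matrix.trace ((Matrix.vecMulVec x x - (3 : ℝ) • Matrix.diagonal x) *
        Matrix.vecMulVec y y)
        = (∑ i, x i * y i) * (∑ i, x i * y i) - 3 * ∑ i, x i * y i := by
      simp only [Matrix.trace, Matrix.diag, Matrix.mul_apply, Matrix.sub_apply,
        Matrix.smul_apply, Matrix.vecMulVec_apply, Matrix.diagonal_apply,
        smul_eq_mul, mul_ite, mul_zero, sub_mul, ite_mul, zero_mul]
      rw [Finset.sum_comm]
      simp only [Finset.sum_sub_distrib]
      congr 1
      · rw [Finset.sum_mul]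
        refine Finset.sum_congr rfl fun j _ => ?_
        rw [Finset.mul_sum]
        exact Finset.sum_congr rfl fun i _ => by ring
      · rw [Finset.mul_sum]
        congr 1; funext j
        rw [Finset.sum_ite_eq' Finset.univ j fun i => 3 * x i * (y j * y i)]
        simp only [Finset.mem_univ, if_true]
        rcases hx j with h | h <;> rcases hy j with h' | h' <;> simp [h, h']
    rw [htr]; ring
  · obtain ⟨m, hm⟩ : ∃ m : ℕ, (∑ i, x i * y i) = (m : ℝ) := by
      classical
      refine Finset.sum_induction _ (fun r => ∃ m : ℕ, r = (m : ℝ)) ?_ ⟨0, by simp⟩ ?_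
      · rintro a b ⟨p, rfl⟩ ⟨q, rfl⟩; exact ⟨p + q, by push_cast; ring⟩
      · intro i _
        rcases hx i with h | h <;> rcases hy i with h' | h' <;>
          [exact ⟨0, by simp [h, h']⟩; exact ⟨0, by simp [h, h']⟩;
           exact ⟨0, by simp [h, h']⟩; exact ⟨1, by simp [h, h']⟩]
    rw [hm]
    rcases Nat.lt_or_ge m 2 with h | h
    · interval_cases m <;> norm_num
    · have h1 : (1 : ℝ) ≤ (m : ℝ) := by exact_mod_cast Nat.one_le_of_lt h
      have h2 : (2 : ℝ) ≤ (m : ℝ) := by exact_mod_cast h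
      nlinarith
end

section
/- Let p be a prime and let p_1, ..., p_t be all primes strictly less than p. Then √p does not belong to the field ℚ(√p_1, ..., √p_t). -/
open Real

/-- The rationals as a subfield of ℝ. -/
noncomputable def ratSubfield : Subfield ℝ where
  carrier := Set.range ((↑) : ℚ → ℝ)
  one_mem' := ⟨1, by push_cast; ring⟩
  zero_mem' := ⟨0, by push_cast; ring⟩
  add_mem' := by rintro _ _ ⟨a, rfl⟩ ⟨b, rfl⟩; exact ⟨a + b, by push_cast; ring⟩
  mul_mem' := by rintro _ _ ⟨a, rfl⟩ ⟨b, rfl⟩; exact ⟨a * b, by push_cast; ring⟩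
  neg_mem' := by rintro _ ⟨a, rfl⟩; exact ⟨-a, by push_cast; ring⟩
  inv_mem' := by rintro _ ⟨a, rfl⟩; exact ⟨a⁻¹, by push_cast; ring⟩

/-- Elements of the closure of `insert (√d) T` have the form `a + b √d` with
`a, b` in the closure of `T`. -/
theorem quad_mem (T : Set ℝ) (d : ℝ) (hd0 : 0 ≤ d)
    (hd : d ∈ Subfield.closure T) (hs : Real.sqrt d ∉ Subfield.closure T)
    {x : ℝ} (hx : x ∈ Subfield.closure (insert (Real.sqrt d) T)) :
    ∃ a b, a ∈ Subfield.closure T ∧ b ∈ Subfield.closure T ∧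
      x = a + b * Real.sqrt d := by
  set K := Subfield.closure T with hK
  set s := Real.sqrt d with hsdef
  have hs2 : s * s = d := Real.mul_self_sqrt hd0
  set K' : Subfield ℝ :=
    { carrier := {x : ℝ | ∃ a b, a ∈ K ∧ b ∈ K ∧ x = a + b * s}
      one_mem' := ⟨1, 0, one_mem K, zero_mem K, by ring⟩
      zero_mem' := ⟨0, 0, zero_mem K, zero_mem K, by ring⟩
      add_mem' := by
        rintro _ _ ⟨a, b, ha, hb, rfl⟩ ⟨c, e, hc, he, rfl⟩
        exact ⟨a + c, b + e, add_mem ha hc, add_mem hb he, by ring⟩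
      mul_mem' := by
        rintro _ _ ⟨a, b, ha, hb, rfl⟩ ⟨c, e, hc, he, rfl⟩
        exact ⟨a * c + b * e * d, a * e + b * c,
          add_mem (mul_mem ha hc) (mul_mem (mul_mem hb he) hd),
          add_mem (mul_mem ha he) (mul_mem hb hc), by linear_combination b * e * hs2⟩
      neg_mem' := by
        rintro _ ⟨a, b, ha, hb, rfl⟩
        exact ⟨-a, -b, neg_mem ha, neg_mem hb, by ring⟩
      inv_mem' := by
        rintro x ⟨a, b, ha, hb, rfl⟩
        by_cases hx0 : a + b * s = 0
        · exact ⟨0, 0, zero_mem K, zero_mem K, by rw [hx0, inv_zero]; ring⟩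
        have hdisc : a ^ 2 - b ^ 2 * d ≠ 0 := by
          intro heq
          have hb0 : b ≠ 0 := by
            rintro rfl
            apply hx0
            have : a ^ 2 = 0 := by linarith [sq_nonneg a, heq]
            have : a = 0 := by nlinarith [sq_nonneg a]
            simp [this]
          have hcases : s = a / b ∨ s = -(a / b) := by
            have h1 : (s - a / b) * (s + a / b) = 0 := by
              field_simp
              nlinarith [hs2, heq]
            rcases mul_eq_zero.mp h1 with h | h
            · left; linarith
            · right; linarith
          rcases hcases with h | h
          · exact hs (h ▸ div_mem ha hb)
          · exact hs (h ▸ neg_mem (div_mem ha hb))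
        have hmul : (a + b * s) * (a / (a ^ 2 - b ^ 2 * d) + -b / (a ^ 2 - b ^ 2 * d) * s) = 1 := by
          field_simp
          linear_combination (-(b^2)) * hs2
        exact ⟨a / (a ^ 2 - b ^ 2 * d), -b / (a ^ 2 - b ^ 2 * d),
          div_mem ha (sub_mem (pow_mem ha 2) (mul_mem (pow_mem hb 2) hd)),
          div_mem (neg_mem hb) (sub_mem (pow_mem ha 2) (mul_mem (pow_mem hb 2) hd)),
          inv_eq_of_mul_eq_one_right hmul⟩ }
  have hle : Subfield.closure (insert s T) ≤ K' := by
    rw [Subfield.closure_le]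
    intro y hy
    rcases hy with rfl | hy
    · exact ⟨0, 1, zero_mem K, one_mem K, by ring⟩
    · exact ⟨y, 0, Subfield.subset_closure hy, zero_mem K, by ring⟩
  exact hle hx

theorem sqrt_not_mem_key (p : ℕ) :
    ∀ n : ℕ, Squarefree n → 1 < n → (∀ q : ℕ, q.Prime → q < p → ¬ q ∣ n) →
    Real.sqrt n ∉
      Subfield.closure {x : ℝ | ∃ q : ℕ, q.Prime ∧ q < p ∧ x = Real.sqrt q} := by
  induction p using Nat.strong_induction_on with
  | _ p ih =>
    intro n hsf hn hnd hmem
    by_cases hex : ∃ q : ℕ, q.Prime ∧ q < p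
    · -- take the largest prime q < p
      set F : Finset ℕ := (Finset.range p).filter Nat.Prime with hF
      have hFne : F.Nonempty := by
        obtain ⟨q, hq, hqp⟩ := hex
        exact ⟨q, by simp [hF, hqp, hq]⟩
      set q : ℕ := F.max' hFne with hqdef
      have hqmem : q ∈ F := F.max'_mem hFne
      have hqP : q.Prime := (Finset.mem_filter.mp hqmem).2
      have hqlt : q < p := Finset.mem_range.mp (Finset.mem_filter.mp hqmem).1
      have hqmax : ∀ r : ℕ, r.Prime → r < p → r ≤ q := by
        intro r hr hrp
        exact F.le_max' r (by simp [hF, hrp, hr])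
      -- set decomposition
      set T : Set ℝ := {x : ℝ | ∃ r : ℕ, r.Prime ∧ r < q ∧ x = Real.sqrt r} with hT
      have hset : {x : ℝ | ∃ r : ℕ, r.Prime ∧ r < p ∧ x = Real.sqrt r}
          = insert (Real.sqrt q) T := by
        ext x
        constructor
        · rintro ⟨r, hr, hrp, rfl⟩
          rcases lt_or_eq_of_le (hqmax r hr hrp) with h | h
          · exact Or.inr ⟨r, hr, h, rfl⟩
          · exact Or.inl (by rw [h])
        · rintro (rfl | ⟨r, hr, hrq, rfl⟩)
          · exact ⟨q, hqP, hqlt, rfl⟩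
          · exact ⟨r, hr, hrq.trans hqlt, rfl⟩
      rw [hset] at hmem
      -- √q is not in the closure of T, by induction
      have hsq : Real.sqrt q ∉ Subfield.closure T := by
        refine ih q hqlt q hqP.squarefree hqP.one_lt ?_
        intro r hr hrq hrdvd
        exact absurd ((Nat.prime_dvd_prime_iff_eq hr hqP).mp hrdvd) hrq.ne
      have hqK : ((q : ℕ) : ℝ) ∈ Subfield.closure T := natCast_mem _ q
      obtain ⟨a, b, ha, hb, hab⟩ :=
        quad_mem T (q : ℝ) (by positivity) hqK hsq hmem
      have hndT : ∀ r : ℕ, r.Prime → r < q → ¬ r ∣ n := fun r hr hrq =>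
        hnd r hr (hrq.trans hqlt)
      have hs2 : Real.sqrt q * Real.sqrt q = (q : ℝ) :=
        Real.mul_self_sqrt (by positivity)
      have hn2 : Real.sqrt n * Real.sqrt n = (n : ℝ) :=
        Real.mul_self_sqrt (by positivity)
      have key : (n : ℝ) = a ^ 2 + b ^ 2 * q + 2 * a * b * Real.sqrt q := by
        linear_combination -hn2 + (Real.sqrt n + a + b * Real.sqrt q) * hab + b ^ 2 * hs2
      by_cases hb0 : b = 0
      · -- √n ∈ closure T : contradiction with induction hypothesis at q
        refine ih q hqlt n hsf hn hndT ?_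
        rw [hab, hb0]
        simpa using ha
      by_cases ha0 : a = 0
      · -- √(n*q) ∈ closure T
        have hqnd : ¬ q ∣ n := hnd q hqP hqlt
        have hcop : n.Coprime q := (hqP.coprime_iff_not_dvd.mpr hqnd).symm
        refine ih q hqlt (n * q) (Nat.squarefree_mul hcop |>.mpr ⟨hsf, hqP.squarefree⟩)
          (lt_of_lt_of_le hn (Nat.le_mul_of_pos_right _ hqP.pos)) ?_ ?_
        · intro r hr hrq hrdvd
          rcases (Nat.Prime.dvd_mul hr).mp hrdvd with h | h
          · exact hndT r hr hrq h
          · exact hrq.ne ((Nat.prime_dvd_prime_iff_eq hr hqP).mp h)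
        · have : Real.sqrt ((n : ℝ) * q) = b * q := by
            rw [Real.sqrt_mul (by positivity), hab, ha0]
            linear_combination b * hs2
          have h2 : Real.sqrt ((n * q : ℕ) : ℝ) = b * q := by
            rw [Nat.cast_mul]; exact this
          rw [h2]
          exact mul_mem hb hqK
      · -- a ≠ 0, b ≠ 0 : √q ∈ closure T, contradiction
        apply hsq
        have : Real.sqrt q = ((n : ℝ) - a ^ 2 - b ^ 2 * q) / (2 * a * b) := by
          field_simp
          linear_combination -key
        rw [this]
        exact div_mem (sub_mem (sub_mem (natCast_mem _ n) (pow_mem ha 2))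
          (mul_mem (pow_mem hb 2) hqK))
          (mul_mem (mul_mem (natCast_mem _ 2) ha) hb)
    · -- no primes below p : the set is empty, so the closure is the rationals
      have hempty : {x : ℝ | ∃ r : ℕ, r.Prime ∧ r < p ∧ x = Real.sqrt r} = ∅ := by
        ext x
        simp only [Set.mem_setOf_eq, Set.mem_empty_iff_false, iff_false]
        rintro ⟨r, hr, hrp, rfl⟩
        exact hex ⟨r, hr, hrp⟩
      have hle : Subfield.closure {x : ℝ | ∃ r : ℕ, r.Prime ∧ r < p ∧ x = Real.sqrt r}
          ≤ ratSubfield := by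
        rw [Subfield.closure_le, hempty]
        exact Set.empty_subset _
      obtain ⟨r, hr⟩ := hle hmem
      have hirr : Irrational (Real.sqrt n) := by
        rw [irrational_sqrt_natCast_iff]
        rintro ⟨k, hk⟩
        have hu : IsUnit k := hsf k (hk ▸ dvd_refl _)
        have hk1 : k = 1 := Nat.isUnit_iff.mp hu
        rw [hk1] at hk
        omega
      exact hirr ⟨r, hr⟩

theorem sqrt_prime_not_in_field (p : ℕ) (hp : p.Prime) :
    Real.sqrt p ∉
      Subfield.closure {x : ℝ | ∃ q : ℕ, q.Prime ∧ q < p ∧ x = Real.sqrt q} := by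
  refine sqrt_not_mem_key p p hp.squarefree hp.one_lt ?_
  intro q hq hqp hdvd
  exact hqp.ne ((Nat.prime_dvd_prime_iff_eq hq hp).mp hdvd)
end

section
/- Define the 2^n-by-2^n matrix F_n indexed by x, y ∈ {0,1}^n by F_n(x,y) = xᵀy(xᵀy - 1). Then the nonnegative rank of F_n is at most C(n,2) = n(n-1)/2. -/
noncomputable def nonnegRank {α β : Type*} [Fintype α] [Fintype β]
    (A : Matrix α β ℝ) : ℕ :=
  sInf {r : ℕ | ∃ (u : Fin r → α → ℝ) (v : Fin r → β → ℝ),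
    (∀ k i, 0 ≤ u k i) ∧ (∀ k j, 0 ≤ v k j) ∧
    ∀ i j, A i j = ∑ k, u k i * v k j}

lemma card_sigma_fin (n : ℕ) :
    Fintype.card (Σ j : Fin n, Fin j.val) = n.choose 2 := by
  rw [Fintype.card_sigma]
  simp only [Fintype.card_fin]
  rw [Fin.sum_univ_eq_sum_range (fun i => i) n, Finset.sum_range_id, Nat.choose_two_right]

lemma sq_sum_idem {n : ℕ} (t : Fin n → ℝ) (ht : ∀ i, t i * t i = t i) :
    (∑ i, t i) * ((∑ i, t i) - 1) =
      ∑ x : (Σ j : Fin n, Fin j.val), 2 * (t ⟨x.2.val, x.2.isLt.trans x.1.isLt⟩ * t x.1) := by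
  have hA : (∑ i, t i) * (∑ i, t i)
      = ∑ i, t i + ∑ p ∈ (Finset.univ : Finset (Fin n)).offDiag, t p.1 * t p.2 := by
    rw [Finset.sum_mul_sum, ← Finset.sum_product', ← Finset.diag_union_offDiag,
      Finset.sum_union (Finset.disjoint_diag_offDiag _), Finset.sum_diag]
    simp [ht]
  have hB : ∑ p ∈ (Finset.univ : Finset (Fin n)).offDiag, t p.1 * t p.2
      = 2 * ∑ p ∈ (Finset.univ : Finset (Fin n)).offDiag with p.1 < p.2, t p.1 * t p.2 := by
    rw [← Finset.sum_filter_add_sum_filter_not _ (fun p => p.1 < p.2), two_mul]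
    congr 1
    refine Finset.sum_nbij' (fun p => (p.2, p.1)) (fun p => (p.2, p.1)) ?_ ?_
      (by simp) (by simp) (fun p _ => mul_comm _ _)
    · rintro ⟨a, b⟩ hp
      simp only [Finset.mem_filter, Finset.mem_offDiag, Finset.mem_univ, true_and,
        not_lt] at hp ⊢
      exact ⟨Ne.symm hp.1, lt_of_le_of_ne hp.2 (Ne.symm hp.1)⟩
    · rintro ⟨a, b⟩ hp
      simp only [Finset.mem_filter, Finset.mem_offDiag, Finset.mem_univ, true_and,
        not_lt] at hp ⊢
      exact ⟨hp.2.ne', hp.2.le⟩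
  have hC : ∑ p ∈ (Finset.univ : Finset (Fin n)).offDiag with p.1 < p.2, t p.1 * t p.2
      = ∑ x : (Σ j : Fin n, Fin j.val), t ⟨x.2.val, x.2.isLt.trans x.1.isLt⟩ * t x.1 := by
    refine (Finset.sum_bij (fun (x : Σ j : Fin n, Fin j.val) (_ : x ∈ Finset.univ) =>
        ((⟨x.2.val, x.2.isLt.trans x.1.isLt⟩ : Fin n), x.1)) ?_ ?_ ?_ ?_).symm
    · rintro ⟨j, i⟩ -
      simp only [Finset.mem_filter, Finset.mem_offDiag, Finset.mem_univ, true_and]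
      exact ⟨Fin.ne_of_lt i.isLt, i.isLt⟩
    · intro a1 ha1 a2 ha2 h
      obtain ⟨j1, i1⟩ := a1
      obtain ⟨j2, i2⟩ := a2
      simp only [Prod.mk.injEq] at h
      obtain ⟨h1, h2⟩ := h
      subst h2
      simp only [Sigma.mk.inj_iff, heq_eq_eq, true_and]
      rw [Fin.mk.injEq] at h1
      exact Fin.ext h1
    · rintro ⟨a, b⟩ hp
      simp only [Finset.mem_filter, Finset.mem_offDiag, Finset.mem_univ, true_and] at hp
      exact ⟨⟨b, ⟨a.val, hp.2⟩⟩, Finset.mem_univ _, by simp⟩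
    · rintro ⟨j, i⟩ -
      rfl
  rw [mul_sub, mul_one, hA]
  rw [hB, hC, Finset.mul_sum]
  ring

theorem nonnegRank_Fn_le (n : ℕ)
    (Fmat : Matrix (Fin n → Bool) (Fin n → Bool) ℝ)
    (hF : ∀ x y, Fmat x y =
      (∑ i, (if x i then (1 : ℝ) else 0) * (if y i then 1 else 0)) *
      ((∑ i, (if x i then (1 : ℝ) else 0) * (if y i then 1 else 0)) - 1)) :
    nonnegRank Fmat ≤ n.choose 2 := by
  set a : (Fin n → Bool) → Fin n → ℝ := fun x i => if x i then 1 else 0 with ha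
  have ha0 : ∀ x i, 0 ≤ a x i := by
    intro x i; simp only [ha]; split <;> norm_num
  have e : (Σ j : Fin n, Fin j.val) ≃ Fin (n.choose 2) :=
    Fintype.equivFinOfCardEq (card_sigma_fin n)
  apply Nat.sInf_le
  refine ⟨fun k x => 2 * (a x ⟨(e.symm k).2.val, (e.symm k).2.isLt.trans (e.symm k).1.isLt⟩
      * a x (e.symm k).1),
    fun k y => a y ⟨(e.symm k).2.val, (e.symm k).2.isLt.trans (e.symm k).1.isLt⟩
      * a y (e.symm k).1, ?_, ?_, ?_⟩
  · intro k i
    have h1 := ha0 i ⟨(e.symm k).2.val, (e.symm k).2.isLt.trans (e.symm k).1.isLt⟩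
    have h2 := ha0 i (e.symm k).1
    positivity
  · intro k j
    have h1 := ha0 j ⟨(e.symm k).2.val, (e.symm k).2.isLt.trans (e.symm k).1.isLt⟩
    have h2 := ha0 j (e.symm k).1
    positivity
  · intro x y
    rw [hF x y]
    set t : Fin n → ℝ := fun i => a x i * a y i with hti
    have ht : ∀ i, t i * t i = t i := by
      intro i
      simp only [hti, ha]
      rcases x i <;> rcases y i <;> norm_num
    have hs : (∑ i, (if x i then (1 : ℝ) else 0) * (if y i then 1 else 0)) = ∑ i, t i := rfl
    rw [hs, sq_sum_idem t ht]
    refine Eq.trans ?_ (Equiv.sum_comp e.symm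
      (fun z : Σ j : Fin n, Fin j.val =>
        2 * (a x ⟨z.2.val, z.2.isLt.trans z.1.isLt⟩ * a x z.1)
        * (a y ⟨z.2.val, z.2.isLt.trans z.1.isLt⟩ * a y z.1))).symm
    apply Finset.sum_congr rfl
    intro z _
    simp only [hti]
    ring
end
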